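/- Let D be a strongly connected digraph on n ≥ 2 vertices such that for every pair of non-adjacent vertices x, y that have a common out-neighbour or a common in-neighbour, one has min{d⁺(x)+d⁻(y), d⁻(x)+d⁺(y)} ≥ n−1 and d(x)+d(y) ≥ 2n−1. Suppose D is not Hamiltonian, let C := x₁x₂…x_m x₁ be a longest cycle of D, and let R := V(D) − V(C). Let y ∈ R, and suppose there are vertices x_α ≠ x_β on C with x_α y ∈ A(D), y x_β ∈ A(D), and no arcs between y and the vertices of C outside the subpath C[x_β, x_α] from x_β to x_α along C. Let C′ := C[x_{α+1}, x_{β−1}] and C″ := C[x_β, x_α]. Then: |V(C′)| ≥ 1; d(y,C) = d(y,C″) = |V(C″)|+1; d⁺(x_{β−1},C″)+d⁻(x_{α+1},C″) = |V(C″)|+1; d(y,R)+d⁺(x_{β−1},R)+d⁻(x_{α+1},R) = 2(n−m−1); and d⁺(x_{β−1},C′) = d⁻(x_{α+1},C′) = |V(C′)|−1. -/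

import Mathlib

set_option linter.unusedVariables false
set_option linter.unusedSectionVars false
set_option linter.deprecated false


variable {V : Type*}

/-- Rotate an index of `Fin m` forward by `k` steps (indices mod `m`). -/
def finRot {m : ℕ} (i : Fin m) (k : ℕ) : Fin m :=
  ⟨(i.val + k) % m, Nat.mod_lt _ (Nat.lt_of_le_of_lt (Nat.zero_le i.val) i.isLt)⟩

/-- `c : Fin k → V` is a directed cycle of length `k`: distinct vertices with an
arc from each vertex to the next one (cyclically). -/
def IsCycle (A : V → V → Prop) {k : ℕ} (c : Fin k → V) : Prop :=
  Function.Injective c ∧ ∀ i, A (c i) (c (finRot i 1))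

/-- Out-degree of `x`. -/
def outDeg [Fintype V] (A : V → V → Prop) [DecidableRel A] (x : V) : ℕ :=
  (Finset.univ.filter fun y => A x y).card

/-- In-degree of `x`. -/
def inDeg [Fintype V] (A : V → V → Prop) [DecidableRel A] (x : V) : ℕ :=
  (Finset.univ.filter fun y => A y x).card

/-- Degree of `x`. -/
def deg [Fintype V] (A : V → V → Prop) [DecidableRel A] (x : V) : ℕ :=
  outDeg A x + inDeg A x

/-- Out-degree of `x` into the set `S`. -/
def outDegOn (A : V → V → Prop) [DecidableRel A] (x : V) (S : Finset V) : ℕ :=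
  (S.filter fun y => A x y).card

/-- In-degree of `x` from the set `S`. -/
def inDegOn (A : V → V → Prop) [DecidableRel A] (x : V) (S : Finset V) : ℕ :=
  (S.filter fun y => A y x).card

/-- Degree of `x` with respect to the set `S`. -/
def degOn (A : V → V → Prop) [DecidableRel A] (x : V) (S : Finset V) : ℕ :=
  outDegOn A x S + inDegOn A x S

/-- The set of indices of the subpath of a cycle on `Fin m` that goes from
index `β` to index `α` (inclusive), following the orientation of the cycle. -/
def cycSeg {m : ℕ} (β α : Fin m) : Finset (Fin m) :=
  (Finset.range ((α.val + m - β.val) % m + 1)).image (finRot β)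


lemma finRot_val {m : ℕ} (s : Fin m) (k : ℕ) : (finRot s k).val = (s.val + k) % m := rfl

lemma finRot_add {m : ℕ} (s : Fin m) (a b : ℕ) : finRot (finRot s a) b = finRot s (a + b) := by
  apply Fin.ext; simp [finRot, Nat.mod_add_mod, Nat.add_assoc]
lemma finRot_inj {m : ℕ} (s : Fin m) {a b : ℕ} (ha : a < m) (hb : b < m)
    (h : finRot s a = finRot s b) : a = b := by
  have h1 : (s.val + a) % m = (s.val + b) % m := congrArg Fin.val h
  have h2 : a % m = b % m := Nat.ModEq.add_left_cancel' s.val h1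
  rwa [Nat.mod_eq_of_lt ha, Nat.mod_eq_of_lt hb] at h2
section
variable {A : V → V → Prop}
def segList {m : ℕ} (c : Fin m → V) (s : Fin m) (len : ℕ) : List V :=
  (List.range len).map (fun t => c (finRot s t))
lemma segList_length {m : ℕ} (c : Fin m → V) (s : Fin m) (len : ℕ) :
    (segList c s len).length = len := by simp [segList]
lemma chain'_segList {m : ℕ} {c : Fin m → V} (hc : IsCycle A c) (s : Fin m) (len : ℕ) :
    List.Chain' A (segList c s len) := by
  rw [segList, List.Chain', List.isChain_map, List.isChain_iff_getElem]
  intro i hi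
  simp only [List.getElem_range]
  rw [← finRot_add s i 1]
  exact hc.2 _
lemma segList_head? {m : ℕ} (c : Fin m → V) (s : Fin m) (len : ℕ) (h : 0 < len) :
    (segList c s len).head? = some (c (finRot s 0)) := by
  obtain ⟨k, rfl⟩ := Nat.exists_eq_add_of_lt h
  rw [segList, List.range_succ_eq_map]
  rfl
lemma segList_getLast? {m : ℕ} (c : Fin m → V) (s : Fin m) (len : ℕ) (h : 0 < len) :
    (segList c s len).getLast? = some (c (finRot s (len - 1))) := by
  obtain ⟨k, rfl⟩ := Nat.exists_eq_add_of_lt h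
  rw [segList, show 0 + k + 1 = k + 1 by omega, List.range_succ, List.map_append]
  simp
lemma segList_nodup {m : ℕ} {c : Fin m → V} (hinj : Function.Injective c) (s : Fin m)
    {len : ℕ} (hlen : len ≤ m) : (segList c s len).Nodup := by
  rw [segList]
  apply List.Nodup.map_on _ List.nodup_range
  intro a ha b hb hab
  simp only [List.mem_range] at ha hb
  exact finRot_inj s (lt_of_lt_of_le ha hlen) (lt_of_lt_of_le hb hlen) (hinj hab)
lemma mem_segList {m : ℕ} (c : Fin m → V) (s : Fin m) (len : ℕ) {v : V} :
    v ∈ segList c s len ↔ ∃ t < len, c (finRot s t) = v := by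
  simp [segList, eq_comm]
lemma cycleList_le {m : ℕ}
    (hlongest : ∀ (k : ℕ) (d : Fin k → V), IsCycle A d → k ≤ m)
    (l : List V) (hne : l ≠ []) (hnd : l.Nodup) (hch : l.Chain' A)
    (hcl : A (l.getLast hne) (l.head hne)) : l.length ≤ m := by
  apply hlongest l.length l.get
  constructor
  · exact List.nodup_iff_injective_get.mp hnd
  · intro i
    have hlen : 0 < l.length := List.length_pos_iff.mpr hne
    rcases Nat.lt_or_ge (i.val + 1) l.length with h | h
    · have : (finRot i 1) = ⟨i.val + 1, h⟩ := by
        apply Fin.ext; simp [finRot, Nat.mod_eq_of_lt h]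
      rw [this]
      exact List.isChain_iff_getElem.mp hch i.val (by omega)
    · have hi : i.val = l.length - 1 := by omega
      have : (finRot i 1) = ⟨0, hlen⟩ := by
        apply Fin.ext; simp [finRot, hi, Nat.sub_add_cancel hlen]
      rw [this]
      have h1 : l.get i = l.getLast hne := by
        rw [List.getLast_eq_getElem]; simp [hi]
      have h2 : l.get ⟨0, hlen⟩ = l.head hne := by
        exact (List.getElem_zero hlen).symm ▸ rfl
      rw [h1, h2]; exact hcl

/-- A nonempty nodup path from `a` to `b`. -/
def GoodList (A : V → V → Prop) (l : List V) (a b : V) : Prop :=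
  l ≠ [] ∧ l.Nodup ∧ l.Chain' A ∧ l.head? = some a ∧ l.getLast? = some b

lemma goodList_single (v : V) : GoodList A [v] v v := by
  refine ⟨by simp, by simp, List.isChain_singleton v, rfl, rfl⟩

lemma goodList_pair {v w : V} (h : A v w) (hvw : v ≠ w) : GoodList A [v, w] v w := by
  refine ⟨by simp, by simp [hvw], List.isChain_pair.mpr h, rfl, rfl⟩

lemma goodList_seg {m : ℕ} {c : Fin m → V} (hc : IsCycle A c) (s : Fin m) {len : ℕ}
    (h0 : 0 < len) (hlen : len ≤ m) :
    GoodList A (segList c s len) (c s) (c (finRot s (len - 1))) := by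
  have h := segList_head? c s len h0
  rw [show finRot s 0 = s by apply Fin.ext; simp [finRot, Nat.mod_eq_of_lt s.isLt]] at h
  exact ⟨by rw [← List.length_pos_iff_ne_nil, segList_length]; omega,
    segList_nodup hc.1 s hlen, chain'_segList hc s len, h, segList_getLast? c s len h0⟩

lemma goodList_append {l₁ l₂ : List V} {a b a' b' : V} (h₁ : GoodList A l₁ a b)
    (h₂ : GoodList A l₂ a' b') (harc : A b a') (hdisj : l₁.Disjoint l₂) :
    GoodList A (l₁ ++ l₂) a b' := by
  obtain ⟨ne1, nd1, ch1, hd1, lt1⟩ := h₁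
  obtain ⟨ne2, nd2, ch2, hd2, lt2⟩ := h₂
  refine ⟨by simp [ne1], List.Nodup.append nd1 nd2 hdisj, ?_, ?_, ?_⟩
  · rw [List.Chain', List.isChain_append]
    refine ⟨ch1, ch2, ?_⟩
    intro x hx z hz
    rw [lt1] at hx; rw [hd2] at hz
    simp only [Option.mem_def, Option.some_inj] at hx hz
    rw [← hx, ← hz]; exact harc
  · rw [List.head?_append, hd1]; rfl
  · rw [List.getLast?_append, lt2]; rfl

lemma goodList_cycle_le {m : ℕ}
    (hlongest : ∀ (k : ℕ) (d : Fin k → V), IsCycle A d → k ≤ m)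
    {l : List V} {a b : V} (h : GoodList A l a b) (harc : A b a) : l.length ≤ m := by
  obtain ⟨ne, nd, ch, hd, lt⟩ := h
  apply cycleList_le hlongest l ne nd ch
  rw [List.head?_eq_head ne] at hd
  rw [List.getLast?_eq_getLast ne] at lt
  simp only [Option.some_inj] at hd lt
  rw [hd, lt]; exact harc

lemma segList_disjoint {m : ℕ} {c : Fin m → V} (hinj : Function.Injective c) (s : Fin m)
    {o₁ l₁ o₂ l₂ : ℕ} (h1 : o₁ + l₁ ≤ o₂) (h2 : o₂ + l₂ ≤ m) :
    (segList c (finRot s o₁) l₁).Disjoint (segList c (finRot s o₂) l₂) := by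
  intro v hv1 hv2
  rw [mem_segList] at hv1 hv2
  obtain ⟨t1, ht1, e1⟩ := hv1
  obtain ⟨t2, ht2, e2⟩ := hv2
  rw [finRot_add] at e1 e2
  have := finRot_inj s (by omega) (by omega) (hinj (e1.trans e2.symm))
  omega

lemma segList_disjoint_single {m : ℕ} {c : Fin m → V} {y : V} (hy : ∀ i, c i ≠ y)
    (s : Fin m) (len : ℕ) : (segList c s len).Disjoint [y] := by
  intro v hv1 hv2
  rw [mem_segList] at hv1
  obtain ⟨t, _, e⟩ := hv1
  simp only [List.mem_singleton] at hv2
  exact hy _ (e.trans hv2)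

lemma finRot_self' {m : ℕ} (s : Fin m) : finRot s m = s := by
  apply Fin.ext; simp [finRot, Nat.add_mod_right, Nat.mod_eq_of_lt s.isLt]

lemma finRot_zero' {m : ℕ} (s : Fin m) : finRot s 0 = s := by
  apply Fin.ext; simp [finRot, Nat.mod_eq_of_lt s.isLt]

variable {m : ℕ} {c : Fin m → V} {y : V}

/-- One cannot insert `y` between two consecutive cycle vertices. -/
lemma no_insert (hc : IsCycle A c)
    (hlongest : ∀ (k : ℕ) (d : Fin k → V), IsCycle A d → k ≤ m)
    (hyc : ∀ i, c i ≠ y) (i : Fin m) : ¬ (A (c i) y ∧ A y (c (finRot i 1))) := by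
  rintro ⟨h1, h2⟩
  have hm : 0 < m := Nat.pos_of_ne_zero (by rintro rfl; exact i.elim0)
  have g1 := goodList_seg (A := A) hc (finRot i 1) hm (le_refl m)
  have hlast : finRot (finRot i 1) (m - 1) = i := by
    rw [finRot_add, show 1 + (m-1) = m by omega, finRot_self']
  rw [hlast] at g1
  have g := goodList_append g1 (goodList_single y) h1
    (segList_disjoint_single hyc _ _)
  have hle := goodList_cycle_le hlongest g h2
  rw [List.length_append, segList_length] at hle
  simp at hle

/-- Claim 1 forbidden configuration for the `b`-count. -/
lemma no_cross (hc : IsCycle A c)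
    (hlongest : ∀ (k : ℕ) (d : Fin k → V), IsCycle A d → k ≤ m)
    (hyc : ∀ i, c i ≠ y) {β : Fin m} {ℓ : ℕ} (hℓ1 : 1 ≤ ℓ) (hℓm : ℓ < m)
    (hαy : A (c (finRot β (ℓ - 1))) y) (hyβ : A y (c β))
    {t : ℕ} (ht : t + 1 < ℓ) :
    ¬ (A (c (finRot β (m - 1))) (c (finRot β (t + 1))) ∧
       A (c (finRot β t)) (c (finRot β ℓ))) := by
  rintro ⟨h1, h2⟩
  have hinj := hc.1
  have g1 := goodList_seg (A := A) hc (finRot β ℓ) (len := m - ℓ) (by omega) (by omega)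
  rw [finRot_add, show ℓ + (m - ℓ - 1) = m - 1 by omega] at g1
  have g2 := goodList_seg (A := A) hc (finRot β (t+1)) (len := ℓ - 1 - t) (by omega) (by omega)
  rw [finRot_add, show t + 1 + (ℓ - 1 - t - 1) = ℓ - 1 by omega] at g2
  have g4 := goodList_seg (A := A) hc β (len := t + 1) (by omega) (by omega)
  rw [show t + 1 - 1 = t by omega] at g4
  have d12 : (segList c (finRot β ℓ) (m - ℓ)).Disjoint (segList c (finRot β (t+1)) (ℓ - 1 - t)) :=
    (segList_disjoint hinj β (o₁ := t+1) (o₂ := ℓ) (by omega) (by omega)).symm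
  have g12 := goodList_append g1 g2 h1 d12
  have g12y := goodList_append g12 (goodList_single y) hαy
    (by rw [List.disjoint_append_left]
        exact ⟨segList_disjoint_single hyc _ _, segList_disjoint_single hyc _ _⟩)
  have hβ0 : segList c β (t+1) = segList c (finRot β 0) (t+1) := by rw [finRot_zero']
  have g' := goodList_append g12y g4 hyβ
    (by rw [List.disjoint_append_left, List.disjoint_append_left]
        refine ⟨⟨?_, ?_⟩, ?_⟩
        · rw [hβ0]; exact (segList_disjoint hinj β (o₁ := 0) (o₂ := ℓ) (by omega) (by omega)).symm
        · rw [hβ0]; exact (segList_disjoint hinj β (o₁ := 0) (o₂ := t+1) (by omega) (by omega)).symm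
        · exact (segList_disjoint_single hyc _ _).symm)
  have hle := goodList_cycle_le hlongest g' h2
  simp only [List.length_append, segList_length, List.length_singleton] at hle
  omega

/-- Forbidden configuration for `R`: `x_{β-1} → z → y`. -/
lemma no_R_in (hc : IsCycle A c)
    (hlongest : ∀ (k : ℕ) (d : Fin k → V), IsCycle A d → k ≤ m)
    (hyc : ∀ i, c i ≠ y) {β : Fin m} {ℓ : ℕ} (hℓ1 : 1 ≤ ℓ) (hℓm : ℓ < m)
    (hyβ : A y (c β)) {z : V} (hzc : ∀ i, c i ≠ z) (hzy : z ≠ y) :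
    ¬ (A (c (finRot β (m - 1))) z ∧ A z y) := by
  rintro ⟨h1, h2⟩
  have hinj := hc.1
  have g1 := goodList_seg (A := A) hc (finRot β ℓ) (len := m - ℓ) (by omega) (by omega)
  rw [finRot_add, show ℓ + (m - ℓ - 1) = m - 1 by omega] at g1
  have g3 := goodList_seg (A := A) hc β (len := ℓ) (by omega) (by omega)
  have hβ0 : segList c β ℓ = segList c (finRot β 0) ℓ := by rw [finRot_zero']
  have gzy := goodList_pair (A := A) h2 hzy
  have g' := goodList_append (goodList_append g1 gzy h1
      (by intro v hv1 hv2
          rw [mem_segList] at hv1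
          obtain ⟨t, _, e⟩ := hv1
          simp only [List.mem_cons, List.mem_singleton, List.not_mem_nil, or_false] at hv2
          rcases hv2 with rfl | rfl
          exacts [hzc _ e, hyc _ e])) g3 hyβ
    (by rw [List.disjoint_append_left]
        constructor
        · rw [hβ0]; exact (segList_disjoint hinj β (o₁ := 0) (o₂ := ℓ) (by omega) (by omega)).symm
        · intro v hv1 hv2
          simp only [List.mem_cons, List.mem_singleton, List.not_mem_nil, or_false] at hv1
          rw [mem_segList] at hv2
          obtain ⟨t, _, e⟩ := hv2
          rcases hv1 with rfl | rfl
          exacts [hzc _ e, hyc _ e])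
  have harc : A (c (finRot β (ℓ - 1))) (c (finRot β ℓ)) := by
    have := hc.2 (finRot β (ℓ - 1))
    rwa [finRot_add, show ℓ - 1 + 1 = ℓ by omega] at this
  have hle := goodList_cycle_le hlongest g' harc
  simp only [List.length_append, segList_length, List.length_cons,
    List.length_singleton, List.length_nil] at hle
  omega

/-- Forbidden configuration for `R`: `y → z → x_{α+1}`. -/
lemma no_R_out (hc : IsCycle A c)
    (hlongest : ∀ (k : ℕ) (d : Fin k → V), IsCycle A d → k ≤ m)
    (hyc : ∀ i, c i ≠ y) {β : Fin m} {ℓ : ℕ} (hℓ1 : 1 ≤ ℓ) (hℓm : ℓ < m)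
    (hαy : A (c (finRot β (ℓ - 1))) y) {z : V} (hzc : ∀ i, c i ≠ z) (hzy : z ≠ y) :
    ¬ (A y z ∧ A z (c (finRot β ℓ))) := by
  rintro ⟨h1, h2⟩
  have hinj := hc.1
  have g1 := goodList_seg (A := A) hc β (len := ℓ) (by omega) (by omega)
  have g2 := goodList_seg (A := A) hc (finRot β ℓ) (len := m - ℓ) (by omega) (by omega)
  rw [finRot_add, show ℓ + (m - ℓ - 1) = m - 1 by omega] at g2
  have hβ0 : segList c β ℓ = segList c (finRot β 0) ℓ := by rw [finRot_zero']
  have gyz := goodList_pair (A := A) h1 (Ne.symm hzy)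
  have g' := goodList_append (goodList_append g1 gyz hαy
      (by intro v hv1 hv2
          rw [mem_segList] at hv1
          obtain ⟨t, _, e⟩ := hv1
          simp only [List.mem_cons, List.mem_singleton, List.not_mem_nil, or_false] at hv2
          rcases hv2 with rfl | rfl
          exacts [hyc _ e, hzc _ e])) g2 h2
    (by rw [List.disjoint_append_left]
        constructor
        · rw [hβ0]; exact segList_disjoint hinj β (o₁ := 0) (o₂ := ℓ) (by omega) (by omega)
        · intro v hv1 hv2
          simp only [List.mem_cons, List.mem_singleton, List.not_mem_nil, or_false] at hv1
          rw [mem_segList] at hv2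
          obtain ⟨t, _, e⟩ := hv2
          rcases hv1 with rfl | rfl
          exacts [hyc _ e, hzc _ e])
  have harc : A (c (finRot β (m - 1))) (c β) := by
    have := hc.2 (finRot β (m - 1))
    rwa [finRot_add, show m - 1 + 1 = m by omega, finRot_self'] at this
  have hle := goodList_cycle_le hlongest g' harc
  simp only [List.length_append, segList_length, List.length_cons,
    List.length_singleton, List.length_nil] at hle
  omega
end


lemma ite_pair_le {P Q : Prop} [Decidable P] [Decidable Q] (h : ¬ (P ∧ Q)) :
    (if Q then 1 else 0) + (if P then 1 else 0) ≤ 1 := by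
  split_ifs with h1 h2
  · exact absurd ⟨h2, h1⟩ h
  all_goals omega

section Counting
variable [Fintype V] [DecidableEq V] (A : V → V → Prop) [DecidableRel A]

lemma outDegOn_image (x : V) (L : ℕ) (f : ℕ → V)
    (hf : ∀ s ∈ Finset.range L, ∀ t ∈ Finset.range L, f s = f t → s = t) :
    outDegOn A x ((Finset.range L).image f) = ∑ t ∈ Finset.range L, if A x (f t) then 1 else 0 := by
  unfold outDegOn
  rw [Finset.card_filter, Finset.sum_image hf]

lemma inDegOn_image (x : V) (L : ℕ) (f : ℕ → V)
    (hf : ∀ s ∈ Finset.range L, ∀ t ∈ Finset.range L, f s = f t → s = t) :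
    inDegOn A x ((Finset.range L).image f) = ∑ t ∈ Finset.range L, if A (f t) x then 1 else 0 := by
  unfold inDegOn
  rw [Finset.card_filter, Finset.sum_image hf]

lemma outDegOn_eq_sum (x : V) (S : Finset V) :
    outDegOn A x S = ∑ v ∈ S, if A x v then 1 else 0 := Finset.card_filter _ _

lemma inDegOn_eq_sum (x : V) (S : Finset V) :
    inDegOn A x S = ∑ v ∈ S, if A v x then 1 else 0 := Finset.card_filter _ _

lemma outDegOn_split (x : V) {S T : Finset V} (h : T ⊆ S) :
    outDegOn A x S = outDegOn A x T + outDegOn A x (S \ T) := by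
  unfold outDegOn
  conv_lhs => rw [← Finset.union_sdiff_of_subset h]
  rw [Finset.filter_union,
    Finset.card_union_of_disjoint (Finset.disjoint_filter_filter Finset.disjoint_sdiff)]

lemma inDegOn_split (x : V) {S T : Finset V} (h : T ⊆ S) :
    inDegOn A x S = inDegOn A x T + inDegOn A x (S \ T) := by
  unfold inDegOn
  conv_lhs => rw [← Finset.union_sdiff_of_subset h]
  rw [Finset.filter_union,
    Finset.card_union_of_disjoint (Finset.disjoint_filter_filter Finset.disjoint_sdiff)]

lemma outDeg_eq_univ (x : V) : outDeg A x = outDegOn A x Finset.univ := rfl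

lemma inDeg_eq_univ (x : V) : inDeg A x = inDegOn A x Finset.univ := rfl

end Counting

set_option maxHeartbeats 1600000 in
/-- Claim 1. With `C = x₁…x_m x₁` a longest cycle of the
non-Hamiltonian strong digraph `D`, `R = V(D) - V(C)`, `y ∈ R`, `x_α y, y x_β ∈ A(D)`
(`x_α ≠ x_β`), and no arcs between `y` and the vertices of `C` outside the subpath
`C″ = C[x_β, x_α]`, one has, with `C′ = C[x_{α+1}, x_{β-1}]` (the vertices of `C`
outside `C″`): `|V(C′)| ≥ 1`, `d(y,C) = d(y,C″) = |C″|+1`,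
`d⁺(x_{β-1},C″) + d⁻(x_{α+1},C″) = |C″|+1`,
`d(y,R) + d⁺(x_{β-1},R) + d⁻(x_{α+1},R) = 2(n-m-1)`, and
`d⁺(x_{β-1},C′) = d⁻(x_{α+1},C′) = |C′|-1`. -/

theorem claim1_of_BJGY
    [Fintype V] [DecidableEq V] (A : V → V → Prop) [DecidableRel A]
    (hirr : ∀ v : V, ¬ A v v)
    (n : ℕ) (hn : n = Fintype.card V) (h2 : 2 ≤ n)
    (hstrong : ∀ u v : V, u ≠ v → Relation.TransGen A u v)
    (hcond : ∀ x y : V, x ≠ y → ¬ A x y → ¬ A y x →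
      (∃ z : V, (A x z ∧ A y z) ∨ (A z x ∧ A z y)) →
      n - 1 ≤ min (outDeg A x + inDeg A y) (inDeg A x + outDeg A y) ∧
      2 * n - 1 ≤ deg A x + deg A y)
    (hnotham : ¬ ∃ c : Fin n → V, IsCycle A c)
    (m : ℕ) (hm2 : 2 ≤ m) (c : Fin m → V) (hc : IsCycle A c)
    (hlongest : ∀ (k : ℕ) (d : Fin k → V), IsCycle A d → k ≤ m)
    (R : Finset V) (hR : R = Finset.univ \ Finset.image c Finset.univ)
    (y : V) (hy : y ∈ R)
    (α β : Fin m) (hαβ : c α ≠ c β)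
    (hαy : A (c α) y) (hyβ : A y (c β))
    (Cdd : Finset V) (hCdd : Cdd = (cycSeg β α).image c)
    (Cd : Finset V) (hCd : Cd = Finset.image c Finset.univ \ Cdd)
    (hnoarc : ∀ v ∈ Cd, ¬ A y v ∧ ¬ A v y) :
    1 ≤ Cd.card ∧
    degOn A y (Finset.image c Finset.univ) = Cdd.card + 1 ∧
    degOn A y Cdd = Cdd.card + 1 ∧
    outDegOn A (c (finRot β (m - 1))) Cdd + inDegOn A (c (finRot α 1)) Cdd = Cdd.card + 1 ∧
    degOn A y R + outDegOn A (c (finRot β (m - 1))) R + inDegOn A (c (finRot α 1)) R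
      = 2 * (n - m - 1) ∧
    outDegOn A (c (finRot β (m - 1))) Cd = Cd.card - 1 ∧
    inDegOn A (c (finRot α 1)) Cd = Cd.card - 1 := by
  have hinj := hc.1
  have hm0 : 0 < m := by omega
  have himg : (Finset.image c Finset.univ).card = m := by
    rw [Finset.card_image_of_injective _ hinj, Finset.card_univ, Fintype.card_fin]
  have hRc : ∀ z ∈ R, ∀ i, c i ≠ z := by
    intro z hz i h
    rw [hR, Finset.mem_sdiff] at hz
    exact hz.2 (Finset.mem_image.mpr ⟨i, Finset.mem_univ i, h⟩)
  have hyc : ∀ i, c i ≠ y := hRc y hy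
  obtain ⟨ℓ, hℓdef⟩ : ∃ ℓ, ℓ = (α.val + m - β.val) % m + 1 := ⟨_, rfl⟩
  have hℓ1 : 1 ≤ ℓ := by omega
  have hℓle : ℓ ≤ m := by
    have := Nat.mod_lt (α.val + m - β.val) hm0; omega
  have hαrot : α = finRot β (ℓ - 1) := by
    apply Fin.ext
    rw [finRot_val]
    have h1 : ℓ - 1 = (α.val + m - β.val) % m := by omega
    have h2' : β.val + (α.val + m - β.val) = α.val + m := by
      have := β.isLt; omega
    rw [h1, Nat.add_mod_mod, h2', Nat.add_mod_right, Nat.mod_eq_of_lt α.isLt]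
  have hαy' : A (c (finRot β (ℓ - 1))) y := hαrot ▸ hαy
  have hα1 : finRot α 1 = finRot β ℓ := by
    rw [hαrot, finRot_add, Nat.sub_add_cancel hℓ1]
  have hℓm : ℓ < m := by
    rcases Nat.lt_or_ge ℓ m with h | h
    · exact h
    · exfalso
      have hℓm' : ℓ = m := le_antisymm hℓle h
      have hfb : finRot α 1 = β := by rw [hα1, hℓm', finRot_self']
      exact no_insert hc hlongest hyc α ⟨hαy, hfb ▸ hyβ⟩
  -- index injectivity on ranges
  have hfinj : ∀ L ≤ m, ∀ s ∈ Finset.range L, ∀ t ∈ Finset.range L,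
      c (finRot β s) = c (finRot β t) → s = t := by
    intro L hL s hs t ht h
    exact finRot_inj β (lt_of_lt_of_le (Finset.mem_range.mp hs) hL)
      (lt_of_lt_of_le (Finset.mem_range.mp ht) hL) (hinj h)
  -- description of Cdd
  have hCdd_eq : Cdd = (Finset.range ℓ).image (fun t => c (finRot β t)) := by
    rw [hCdd]
    unfold cycSeg
    rw [← hℓdef, Finset.image_image]
    rfl
  have hCddcard : Cdd.card = ℓ := by
    rw [hCdd_eq, Finset.card_image_of_injOn (fun s hs t ht h =>
      hfinj ℓ hℓle s hs t ht h), Finset.card_range]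
  have hCddsub : Cdd ⊆ Finset.image c Finset.univ := by
    rw [hCdd_eq]
    intro v hv
    rcases Finset.mem_image.mp hv with ⟨t, _, rfl⟩
    exact Finset.mem_image.mpr ⟨_, Finset.mem_univ _, rfl⟩
  have hCdcard : Cd.card = m - ℓ := by
    rw [hCd, Finset.card_sdiff_of_subset hCddsub, himg, hCddcard]
  have hmemCd : ∀ o, ℓ ≤ o → o < m → c (finRot β o) ∈ Cd := by
    intro o h1 h2
    rw [hCd, Finset.mem_sdiff]
    refine ⟨Finset.mem_image.mpr ⟨_, Finset.mem_univ _, rfl⟩, ?_⟩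
    rw [hCdd_eq]
    intro hmem
    rcases Finset.mem_image.mp hmem with ⟨t, ht, he⟩
    have ht' : t < ℓ := Finset.mem_range.mp ht
    have := finRot_inj β (by omega) h2 (hinj he)
    omega
  have hxβ1 : c (finRot β (m - 1)) ∈ Cd := hmemCd (m - 1) (by omega) (by omega)
  have hxα1 : c (finRot β ℓ) ∈ Cd := hmemCd ℓ le_rfl hℓm
  have hRcard : R.card = n - m := by
    rw [hR, Finset.card_sdiff_of_subset (Finset.subset_univ _), Finset.card_univ, ← hn, himg]
  have hmn : m < n := by
    have h1 : 0 < R.card := Finset.card_pos.mpr ⟨y, hy⟩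
    have h3 : m ≤ n := by
      rw [hn, ← himg, ← Finset.card_univ]
      exact Finset.card_le_card (Finset.subset_univ _)
    omega
  -- useful cycle arcs
  have harc1 : A (c (finRot β (ℓ - 1))) (c (finRot β ℓ)) := by
    have := hc.2 (finRot β (ℓ - 1))
    rwa [finRot_add, show ℓ - 1 + 1 = ℓ by omega] at this
  have harc2 : A (c (finRot β (m - 1))) (c β) := by
    have := hc.2 (finRot β (m - 1))
    rwa [finRot_add, show m - 1 + 1 = m by omega, finRot_self'] at this
  obtain ⟨L, hL⟩ : ∃ L, ℓ = L + 1 := ⟨ℓ - 1, by omega⟩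
  -- bound a : degOn y Cdd ≤ ℓ + 1
  have hout_a : outDegOn A y Cdd = ∑ t ∈ Finset.range ℓ, if A y (c (finRot β t)) then 1 else 0 := by
    rw [hCdd_eq]; exact outDegOn_image A y ℓ _ (hfinj ℓ hℓle)
  have hin_a : inDegOn A y Cdd = ∑ t ∈ Finset.range ℓ, if A (c (finRot β t)) y then 1 else 0 := by
    rw [hCdd_eq]; exact inDegOn_image A y ℓ _ (hfinj ℓ hℓle)
  have ha : outDegOn A y Cdd + inDegOn A y Cdd ≤ ℓ + 1 := by
    rw [hout_a, hin_a, hL,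
      Finset.sum_range_succ' (fun t => if A y (c (finRot β t)) then 1 else 0) L,
      Finset.sum_range_succ (fun t => if A (c (finRot β t)) y then 1 else 0) L]
    have hmid : (∑ t ∈ Finset.range L, if A y (c (finRot β (t+1))) then 1 else 0)
        + (∑ t ∈ Finset.range L, if A (c (finRot β t)) y then 1 else 0)
        ≤ L := by
      rw [← Finset.sum_add_distrib]
      calc ∑ t ∈ Finset.range L, ((if A y (c (finRot β (t+1))) then 1 else 0)
            + if A (c (finRot β t)) y then 1 else 0)
          ≤ ∑ _t ∈ Finset.range L, 1 := by
            apply Finset.sum_le_sum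
            intro t _
            have hni := no_insert hc hlongest hyc (finRot β t)
            rw [finRot_add] at hni
            exact ite_pair_le hni
        _ = L := by simp
    have hb1 : (if A y (c (finRot β 0)) then 1 else 0) ≤ 1 := by split_ifs <;> omega
    have hb2 : (if A (c (finRot β L)) y then 1 else 0) ≤ 1 := by split_ifs <;> omega
    omega
  -- bound b
  have hout_b : outDegOn A (c (finRot β (m - 1))) Cdd
      = ∑ t ∈ Finset.range ℓ, if A (c (finRot β (m - 1))) (c (finRot β t)) then 1 else 0 := by
    rw [hCdd_eq]; exact outDegOn_image A _ ℓ _ (hfinj ℓ hℓle)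
  have hin_b : inDegOn A (c (finRot β ℓ)) Cdd
      = ∑ t ∈ Finset.range ℓ, if A (c (finRot β t)) (c (finRot β ℓ)) then 1 else 0 := by
    rw [hCdd_eq]; exact inDegOn_image A _ ℓ _ (hfinj ℓ hℓle)
  have hb : outDegOn A (c (finRot β (m - 1))) Cdd + inDegOn A (c (finRot β ℓ)) Cdd ≤ ℓ + 1 := by
    have hrange : Finset.range ℓ = Finset.range (L + 1) := by rw [hL]
    have eO := Finset.sum_range_succ'
      (fun t => if A (c (finRot β (m - 1))) (c (finRot β t)) then 1 else 0) L
    have eI := Finset.sum_range_succ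
      (fun t => if A (c (finRot β t)) (c (finRot β ℓ)) then 1 else 0) L
    rw [hout_b, hin_b, hrange, eO, eI]
    have hmid : (∑ t ∈ Finset.range L, if A (c (finRot β (m - 1))) (c (finRot β (t+1))) then 1 else 0)
        + (∑ t ∈ Finset.range L, if A (c (finRot β t)) (c (finRot β ℓ)) then 1 else 0)
        ≤ L := by
      rw [← Finset.sum_add_distrib]
      calc ∑ t ∈ Finset.range L, ((if A (c (finRot β (m - 1))) (c (finRot β (t+1))) then 1 else 0)
            + if A (c (finRot β t)) (c (finRot β ℓ)) then 1 else 0)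
          ≤ ∑ _t ∈ Finset.range L, 1 := by
            apply Finset.sum_le_sum
            intro t ht
            have hnc := no_cross hc hlongest hyc hℓ1 hℓm hαy' hyβ
              (t := t) (by have := Finset.mem_range.mp ht; omega)
            exact ite_pair_le (fun hpq => hnc ⟨hpq.2, hpq.1⟩)
        _ = L := by simp
    have hb1 : (if A (c (finRot β (m - 1))) (c (finRot β 0)) then 1 else 0) ≤ 1 := by
      split_ifs <;> omega
    have hb2 : (if A (c (finRot β L)) (c (finRot β ℓ)) then 1 else 0) ≤ 1 := by
      split_ifs <;> omega
    omega
  -- bounds p , q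
  have hp : outDegOn A (c (finRot β (m - 1))) Cd ≤ Cd.card - 1 := by
    unfold outDegOn
    have hsub : Cd.filter (fun v => A (c (finRot β (m - 1))) v) ⊆ Cd.erase (c (finRot β (m - 1))) := by
      intro v hv
      rw [Finset.mem_filter] at hv
      rw [Finset.mem_erase]
      refine ⟨?_, hv.1⟩
      rintro rfl
      exact hirr _ hv.2
    calc (Cd.filter (fun v => A (c (finRot β (m - 1))) v)).card
        ≤ (Cd.erase (c (finRot β (m - 1)))).card := Finset.card_le_card hsub
      _ = Cd.card - 1 := Finset.card_erase_of_mem hxβ1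
  have hq : inDegOn A (c (finRot β ℓ)) Cd ≤ Cd.card - 1 := by
    unfold inDegOn
    have hsub : Cd.filter (fun v => A v (c (finRot β ℓ))) ⊆ Cd.erase (c (finRot β ℓ)) := by
      intro v hv
      rw [Finset.mem_filter] at hv
      rw [Finset.mem_erase]
      refine ⟨?_, hv.1⟩
      rintro rfl
      exact hirr _ hv.2
    calc (Cd.filter (fun v => A v (c (finRot β ℓ)))).card
        ≤ (Cd.erase (c (finRot β ℓ))).card := Finset.card_le_card hsub
      _ = Cd.card - 1 := Finset.card_erase_of_mem hxα1
  -- bound r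
  have hr : outDegOn A y R + inDegOn A y R + outDegOn A (c (finRot β (m - 1))) R
      + inDegOn A (c (finRot β ℓ)) R ≤ 2 * (R.card - 1) := by
    rw [outDegOn_eq_sum, inDegOn_eq_sum, outDegOn_eq_sum, inDegOn_eq_sum,
      ← Finset.sum_add_distrib, ← Finset.sum_add_distrib, ← Finset.sum_add_distrib]
    set G := fun z => (((if A y z then 1 else 0) + if A z y then 1 else 0)
      + if A (c (finRot β (m - 1))) z then 1 else 0) + if A z (c (finRot β ℓ)) then 1 else 0 with hG
    rw [← Finset.add_sum_erase R G hy]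
    have hGy : G y = 0 := by
      simp only [hG]
      simp only [if_neg (hirr y), if_neg ((hnoarc _ hxβ1).2), if_neg ((hnoarc _ hxα1).1)]
    have hGz : ∀ z ∈ R.erase y, G z ≤ 2 := by
      intro z hz
      rw [Finset.mem_erase] at hz
      obtain ⟨hzy, hzR⟩ := hz
      have hzc : ∀ i, c i ≠ z := hRc z hzR
      have h1 := no_R_in hc hlongest hyc hℓ1 hℓm hyβ hzc hzy
      have h2 := no_R_out hc hlongest hyc hℓ1 hℓm hαy' hzc hzy
      simp only [hG]
      have i1 : (if A (c (finRot β (m - 1))) z then 1 else 0) + (if A z y then 1 else 0) ≤ 1 :=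
        ite_pair_le (fun hpq => h1 ⟨hpq.2, hpq.1⟩)
      have i2 : (if A y z then 1 else 0) + (if A z (c (finRot β ℓ)) then 1 else 0) ≤ 1 :=
        ite_pair_le (fun hpq => h2 ⟨hpq.2, hpq.1⟩)
      omega
    calc G y + ∑ z ∈ R.erase y, G z
        ≤ 0 + ∑ z ∈ R.erase y, 2 := by
          rw [hGy]
          exact Nat.add_le_add le_rfl (Finset.sum_le_sum hGz)
      _ = 2 * (R.card - 1) := by
          rw [Finset.sum_const, Finset.card_erase_of_mem hy, smul_eq_mul]
          omega
  -- zero contributions of y towards Cd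
  have hz1 : outDegOn A y Cd = 0 := by
    unfold outDegOn
    rw [Finset.card_eq_zero, Finset.filter_eq_empty_iff]
    exact fun v hv => (hnoarc v hv).1
  have hz2 : inDegOn A y Cd = 0 := by
    unfold inDegOn
    rw [Finset.card_eq_zero, Finset.filter_eq_empty_iff]
    exact fun v hv => (hnoarc v hv).2
  -- degree decompositions
  have hRimg : Finset.univ \ Finset.image c Finset.univ = R := hR.symm
  have hCdimg : Finset.image c Finset.univ \ Cdd = Cd := hCd.symm
  have hsplit_out : ∀ x : V,
      outDeg A x = outDegOn A x Cdd + outDegOn A x Cd + outDegOn A x R := by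
    intro x
    rw [outDeg_eq_univ, outDegOn_split A x (Finset.subset_univ (Finset.image c Finset.univ)),
      hRimg, outDegOn_split A x hCddsub, hCdimg]
  have hsplit_in : ∀ x : V,
      inDeg A x = inDegOn A x Cdd + inDegOn A x Cd + inDegOn A x R := by
    intro x
    rw [inDeg_eq_univ, inDegOn_split A x (Finset.subset_univ (Finset.image c Finset.univ)),
      hRimg, inDegOn_split A x hCddsub, hCdimg]
  have hdy_out := hsplit_out y
  have hdy_in := hsplit_in y
  have hdb_out := hsplit_out (c (finRot β (m - 1)))
  have hda_in := hsplit_in (c (finRot β ℓ))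
  -- the two degree-condition applications
  have hcond1 := hcond y (c (finRot β ℓ))
    (fun h => hyc (finRot β ℓ) h.symm)
    (hnoarc _ hxα1).1 (hnoarc _ hxα1).2
    ⟨c (finRot β (ℓ - 1)), Or.inr ⟨hαy', harc1⟩⟩
  have hlow1 : n - 1 ≤ outDeg A y + inDeg A (c (finRot β ℓ)) :=
    le_trans hcond1.1 (min_le_left _ _)
  have hcond2 := hcond y (c (finRot β (m - 1)))
    (fun h => hyc (finRot β (m - 1)) h.symm)
    (hnoarc _ hxβ1).1 (hnoarc _ hxβ1).2
    ⟨c β, Or.inl ⟨hyβ, harc2⟩⟩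
  have hlow2 : n - 1 ≤ inDeg A y + outDeg A (c (finRot β (m - 1))) :=
    le_trans hcond2.1 (min_le_right _ _)
  -- final assembly
  rw [hα1]
  have hdeg1 : degOn A y (Finset.image c Finset.univ)
      = outDegOn A y (Finset.image c Finset.univ) + inDegOn A y (Finset.image c Finset.univ) := rfl
  have hdeg1a : outDegOn A y (Finset.image c Finset.univ) = outDegOn A y Cdd + outDegOn A y Cd := by
    rw [outDegOn_split A y hCddsub, hCdimg]
  have hdeg1b : inDegOn A y (Finset.image c Finset.univ) = inDegOn A y Cdd + inDegOn A y Cd := by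
    rw [inDegOn_split A y hCddsub, hCdimg]
  have hdeg2 : degOn A y Cdd = outDegOn A y Cdd + inDegOn A y Cdd := rfl
  have hdeg3 : degOn A y R = outDegOn A y R + inDegOn A y R := rfl
  clear hout_a hin_a hout_b hin_b hcond hstrong hnotham hnoarc hmemCd hRc hyc hfinj
  clear hirr hαy hyβ hαy' harc1 harc2 hcond1 hcond2 hy hαβ hαrot hα1 hCdd_eq hCddsub hR hCdd hCd
  refine ⟨by omega, by omega, by omega, by omega, by omega, by omega, by omega⟩
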